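/- In the matrix form of OPS, assume there exist a stochastic vector ψ ∈ ℝ^n and constants C ≥ 0, q ∈ [0,1) such that |(W^k)_{ji} − ψ_i| ≤ C q^k for all i, j ∈ [n] and k ≥ 1, and a constant δ_min > 0 such that Σ_j (W^k)_{ji} ≥ n δ_min for all i ∈ [n] and k ≥ 1. Then for every t ≥ 0, Σ_{i=1}^n ‖x_{t+1}^{(i)} − z̄_{t+1}‖² ≤ (4 γ² C² q² / δ_min²) ( Σ_{s=0}^t q^{t−s} ‖G_s‖_F )². -/

import Mathlib

/-- Frobenius norm of a real matrix. -/
noncomputable def frobNorm {d n : ℕ} (A : Matrix (Fin d) (Fin n) ℝ) : ℝ :=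
  Real.sqrt (∑ r, ∑ i, (A r i) ^ 2)

/-- Per-iteration consensus bound in the proof of Lemma 4:
`∑_i ‖x_{t+1}^{(i)} - z̄_{t+1}‖² ≤ (4 γ² C² q² / δ_min²) (∑_{s=0}^t q^{t-s} ‖G_s‖_F)²`. -/
theorem ops_per_iteration_consensus_bound
    (n d : ℕ) (hn : 0 < n) (hd : 0 < d) (γ : ℝ) (hγ : 0 < γ)
    (W : Matrix (Fin n) (Fin n) ℝ)
    (hW_nonneg : ∀ i j, 0 ≤ W i j)
    (hW_row : ∀ i, ∑ j, W i j = 1)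
    (ψ : Fin n → ℝ) (hψ0 : ∀ i, 0 ≤ ψ i) (hψ1 : ∑ i, ψ i = 1)
    (C q δmin : ℝ) (hC : 0 ≤ C) (hq0 : 0 ≤ q) (hq1 : q < 1) (hδ : 0 < δmin)
    (hWgeom : ∀ k : ℕ, 1 ≤ k → ∀ i j : Fin n, |(W ^ k) j i - ψ i| ≤ C * q ^ k)
    (hWlow : ∀ k : ℕ, 1 ≤ k → ∀ i : Fin n, (n : ℝ) * δmin ≤ ∑ j, (W ^ k) j i)
    (G : ℕ → Matrix (Fin d) (Fin n) ℝ)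
    (Z : ℕ → Matrix (Fin d) (Fin n) ℝ)
    (hZ0 : Z 0 = 0)
    (hZrec : ∀ t, Z (t + 1) = (Z t - γ • G t) * W)
    (w : ℕ → Fin n → ℝ)
    (hw0 : ∀ i, w 0 i = 1)
    (hwrec : ∀ t i, w (t + 1) i = ∑ j, W j i * w t j)
    (x : ℕ → Fin n → Fin d → ℝ)
    (hx : ∀ t i r, x t i r = (w t i)⁻¹ * Z t r i)
    (zbar : ℕ → Fin d → ℝ)
    (hzbar : ∀ t r, zbar t r = (n : ℝ)⁻¹ * ∑ i, Z t r i)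
    (t : ℕ) :
    ∑ i, ∑ r, (x (t + 1) i r - zbar (t + 1) r) ^ 2
      ≤ 4 * γ ^ 2 * C ^ 2 * q ^ 2 / δmin ^ 2
        * (∑ s ∈ Finset.range (t + 1), q ^ (t - s) * frobNorm (G s)) ^ 2 := by
  have hnR : (0:ℝ) < n := by exact_mod_cast hn
  -- row sums of powers of W are 1
  have hrow : ∀ k : ℕ, ∀ j : Fin n, ∑ i, (W ^ k) j i = 1 := by
    intro k
    induction k with
    | zero => intro j; simp [Matrix.one_apply]
    | succ k ih =>
      intro j
      rw [pow_succ]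
      simp only [Matrix.mul_apply]
      rw [Finset.sum_comm]
      simp only [← Finset.mul_sum, hW_row, mul_one]
      exact ih j
  -- closed form for Z
  have hZform : ∀ t : ℕ, Z (t+1) = ∑ s ∈ Finset.range (t+1), (-γ) • (G s * W ^ (t+1-s)) := by
    intro t
    induction t with
    | zero =>
      rw [hZrec 0, hZ0]
      simp [Matrix.smul_mul, pow_one]
    | succ t ih =>
      rw [hZrec (t+1), ih, Matrix.sub_mul, Matrix.sum_mul]
      conv_rhs => rw [Finset.sum_range_succ]
      have h1 : t+1+1-(t+1) = 1 := by omega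
      rw [h1, pow_one]
      have h2 : ∀ s ∈ Finset.range (t+1),
          ((-γ) • (G s * W ^ (t+1-s))) * W = (-γ) • (G s * W ^ (t+1+1-s)) := by
        intro s hs
        have hs' : s ≤ t := Nat.lt_succ_iff.mp (Finset.mem_range.mp hs)
        have h3 : t+1+1-s = (t+1-s)+1 := by omega
        rw [h3, pow_succ, Matrix.smul_mul, Matrix.mul_assoc]
      rw [Finset.sum_congr rfl h2, sub_eq_add_neg, Matrix.smul_mul, neg_smul]
  have hZent : ∀ r i, Z (t+1) r i
      = ∑ s ∈ Finset.range (t+1), ∑ j, -γ * (G s r j * (W ^ (t+1-s)) j i) := by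
    intro r i
    rw [hZform t]
    simp [Matrix.sum_apply, Matrix.mul_apply, Finset.mul_sum]
  -- w k i is the i-th column sum of W^k
  have hwk : ∀ k : ℕ, ∀ i : Fin n, w k i = ∑ j, (W ^ k) j i := by
    intro k
    induction k with
    | zero => intro i; rw [hw0]; simp [Matrix.one_apply]
    | succ k ih =>
      intro i
      rw [hwrec]
      have : ∀ j, w k j = ∑ j', (W ^ k) j' j := ih
      simp only [this]
      rw [pow_succ]
      simp only [Matrix.mul_apply]
      rw [Finset.sum_comm]
      apply Finset.sum_congr rfl
      intro j' _
      rw [Finset.mul_sum]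
      apply Finset.sum_congr rfl
      intro j _
      ring
  have hwlow1 : ∀ i, (n:ℝ) * δmin ≤ w (t+1) i := by
    intro i; rw [hwk]; exact hWlow (t+1) (by omega) i
  have hwpos : ∀ i, 0 < w (t+1) i := fun i => lt_of_lt_of_le (by positivity) (hwlow1 i)
  -- key entrywise bound
  have hB : ∀ s, s ≤ t → ∀ i j : Fin n,
      |(w (t+1) i)⁻¹ * (W ^ (t+1-s)) j i - (n:ℝ)⁻¹| ≤ 2*C*q^(t+1-s)/((n:ℝ)*δmin) := by
    intro s hs i j
    set k := t+1-s with hk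
    have hk1 : 1 ≤ k := by omega
    have hkle : k ≤ t+1 := by omega
    set wi := w (t+1) i with hwi
    have hwi0 : 0 < wi := hwpos i
    set a := (W ^ k) j i with ha
    have heq : wi⁻¹ * a - (n:ℝ)⁻¹ = ((n:ℝ) * a - wi) / ((n:ℝ) * wi) := by
      field_simp
    rw [heq, abs_div, abs_of_pos (by positivity : (0:ℝ) < (n:ℝ) * wi)]
    have hnum : |(n:ℝ) * a - wi| ≤ (n:ℝ) * (2 * C * q ^ k) := by
      have hrepr : (n:ℝ) * a - wi = ∑ j' : Fin n, (a - (W ^ (t+1)) j' i) := by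
        rw [hwi, hwk (t+1) i, Finset.sum_sub_distrib, Finset.sum_const]
        simp [mul_comm]
      rw [hrepr]
      calc |∑ j' : Fin n, (a - (W ^ (t+1)) j' i)|
          ≤ ∑ j' : Fin n, |a - (W ^ (t+1)) j' i| := Finset.abs_sum_le_sum_abs _ _
        _ ≤ ∑ _j' : Fin n, (2 * C * q ^ k) := by
            apply Finset.sum_le_sum
            intro j' _
            have h1 : |a - ψ i| ≤ C * q ^ k := hWgeom k hk1 i j
            have h2 : |ψ i - (W ^ (t+1)) j' i| ≤ C * q ^ (t+1) := by
              rw [abs_sub_comm]; exact hWgeom (t+1) (by omega) i j'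
            have h3 : C * q ^ (t+1) ≤ C * q ^ k :=
              mul_le_mul_of_nonneg_left (pow_le_pow_of_le_one hq0 hq1.le hkle) hC
            calc |a - (W ^ (t+1)) j' i|
                = |(a - ψ i) + (ψ i - (W ^ (t+1)) j' i)| := by ring_nf
              _ ≤ |a - ψ i| + |ψ i - (W ^ (t+1)) j' i| := abs_add_le _ _
              _ ≤ C * q ^ k + C * q ^ k := add_le_add h1 (le_trans h2 h3)
              _ = 2 * C * q ^ k := by ring
        _ = (n:ℝ) * (2 * C * q ^ k) := by simp [mul_comm]
    calc |(n:ℝ) * a - wi| / ((n:ℝ) * wi)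
        ≤ ((n:ℝ) * (2 * C * q ^ k)) / ((n:ℝ) * ((n:ℝ) * δmin)) := by
          apply div_le_div₀ (by positivity) hnum (by positivity)
          exact mul_le_mul_of_nonneg_left (hwlow1 i) (by positivity)
      _ = 2*C*q^k/((n:ℝ)*δmin) := by
          field_simp
  -- difference decomposition
  have hdiffeq : ∀ i r, x (t+1) i r - zbar (t+1) r
      = ∑ s ∈ Finset.range (t+1), ∑ j,
          (-γ) * G s r j * ((w (t+1) i)⁻¹ * (W ^ (t+1-s)) j i - (n:ℝ)⁻¹) := by
    intro i r
    have hzb : zbar (t+1) r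
        = ∑ s ∈ Finset.range (t+1), ∑ j, (-γ) * G s r j * (n:ℝ)⁻¹ := by
      rw [hzbar]
      rw [Finset.sum_congr rfl (fun i' _ => hZent r i')]
      rw [Finset.sum_comm]
      rw [Finset.mul_sum]
      apply Finset.sum_congr rfl
      intro s _
      rw [Finset.sum_comm, Finset.mul_sum]
      apply Finset.sum_congr rfl
      intro j _
      simp only [← Finset.mul_sum]
      rw [hrow (t+1-s) j]
      ring
    have hxv : x (t+1) i r
        = ∑ s ∈ Finset.range (t+1), ∑ j,
            (-γ) * G s r j * ((w (t+1) i)⁻¹ * (W ^ (t+1-s)) j i) := by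
      rw [hx, hZent r i, Finset.mul_sum]
      apply Finset.sum_congr rfl
      intro s _
      rw [Finset.mul_sum]
      apply Finset.sum_congr rfl
      intro j _
      ring
    rw [hxv, hzb, ← Finset.sum_sub_distrib]
    apply Finset.sum_congr rfl
    intro s _
    rw [← Finset.sum_sub_distrib]
    apply Finset.sum_congr rfl
    intro j _
    ring
  set K : ℝ := 2*γ*C*q/((n:ℝ)*δmin) with hK
  have hK0 : 0 ≤ K := by positivity
  set S : Fin d → ℝ := fun r => ∑ s ∈ Finset.range (t+1), q^(t-s) * ∑ j, |G s r j| with hS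
  have hS0 : ∀ r, 0 ≤ S r := by
    intro r
    apply Finset.sum_nonneg
    intro s _
    positivity
  -- pointwise bound
  have hdiff : ∀ i r, |x (t+1) i r - zbar (t+1) r| ≤ K * S r := by
    intro i r
    rw [hdiffeq i r]
    calc |∑ s ∈ Finset.range (t+1), ∑ j,
            (-γ) * G s r j * ((w (t+1) i)⁻¹ * (W ^ (t+1-s)) j i - (n:ℝ)⁻¹)|
        ≤ ∑ s ∈ Finset.range (t+1), |∑ j,
            (-γ) * G s r j * ((w (t+1) i)⁻¹ * (W ^ (t+1-s)) j i - (n:ℝ)⁻¹)| :=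
          Finset.abs_sum_le_sum_abs _ _
      _ ≤ ∑ s ∈ Finset.range (t+1), ∑ j,
            |(-γ) * G s r j * ((w (t+1) i)⁻¹ * (W ^ (t+1-s)) j i - (n:ℝ)⁻¹)| :=
          Finset.sum_le_sum (fun s _ => Finset.abs_sum_le_sum_abs _ _)
      _ ≤ ∑ s ∈ Finset.range (t+1), ∑ j,
            γ * |G s r j| * (2*C*q^(t+1-s)/((n:ℝ)*δmin)) := by
          apply Finset.sum_le_sum
          intro s hs
          apply Finset.sum_le_sum
          intro j _
          rw [abs_mul, abs_mul, abs_neg, abs_of_pos hγ]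
          apply mul_le_mul_of_nonneg_left
            (hB s (Nat.lt_succ_iff.mp (Finset.mem_range.mp hs)) i j) (by positivity)
      _ = K * S r := by
          rw [hS, hK, Finset.mul_sum]
          apply Finset.sum_congr rfl
          intro s hs
          have hs' : s ≤ t := Nat.lt_succ_iff.mp (Finset.mem_range.mp hs)
          have hqpow : q^(t+1-s) = q * q^(t-s) := by
            rw [show t+1-s = (t-s)+1 by omega, pow_succ]
            ring
          have hterm : ∀ j, γ * |G s r j| * (2*C*q^(t+1-s)/((n:ℝ)*δmin))
              = |G s r j| * (γ * (2*C*q^(t+1-s)/((n:ℝ)*δmin))) := fun j => by ring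
          rw [Finset.sum_congr rfl (fun j _ => hterm j), ← Finset.sum_mul, hqpow]
          field_simp
  -- Minkowski step
  set T : ℝ := ∑ s ∈ Finset.range (t+1), q ^ (t - s) * frobNorm (G s) with hT
  have hfrob0 : ∀ s, 0 ≤ frobNorm (G s) := fun s => Real.sqrt_nonneg _
  have hT0 : 0 ≤ T := Finset.sum_nonneg (fun s _ => by
    have := hfrob0 s; positivity)
  have hMink : ∑ r, (S r)^2 ≤ (n:ℝ) * T^2 := by
    set f : ℕ → EuclideanSpace ℝ (Fin d) :=
      fun s => WithLp.toLp 2 (fun r => q^(t-s) * ∑ j, |G s r j|) with hf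
    have h1 : ∑ r, (S r)^2 ≤ (∑ s ∈ Finset.range (t+1), ‖f s‖)^2 := by
      have h := norm_sum_le (Finset.range (t+1)) f
      have h2 : ‖∑ s ∈ Finset.range (t+1), f s‖^2 = ∑ r, (S r)^2 := by
        rw [EuclideanSpace.norm_eq, Real.sq_sqrt (by positivity)]
        apply Finset.sum_congr rfl
        intro r _
        rw [WithLp.ofLp_sum, Finset.sum_apply, Real.norm_eq_abs, sq_abs]
      rw [← h2]
      exact pow_le_pow_left₀ (norm_nonneg _) h 2
    have h3 : ∀ s ∈ Finset.range (t+1), ‖f s‖ ≤ q^(t-s) * (Real.sqrt n * frobNorm (G s)) := by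
      intro s _
      rw [EuclideanSpace.norm_eq]
      have hb : ∑ r, ‖f s r‖^2 ≤ (q^(t-s) * (Real.sqrt n * frobNorm (G s)))^2 := by
        have hcs : ∀ r, (∑ j, |G s r j|)^2 ≤ (n:ℝ) * ∑ j, (G s r j)^2 := by
          intro r
          have := Finset.sum_mul_sq_le_sq_mul_sq Finset.univ (fun j => |G s r j|) (fun _ => 1)
          simp only [mul_one, one_pow, Finset.sum_const, Finset.card_univ, Fintype.card_fin,
            nsmul_eq_mul, sq_abs] at this
          calc (∑ j, |G s r j|)^2 ≤ (∑ j, (G s r j)^2) * (n:ℝ) := this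
            _ = (n:ℝ) * ∑ j, (G s r j)^2 := by ring
        have hfrobsq : frobNorm (G s)^2 = ∑ r, ∑ j, (G s r j)^2 := by
          rw [frobNorm, Real.sq_sqrt (by positivity)]
        calc ∑ r, ‖f s r‖^2
            = ∑ r, (q^(t-s))^2 * (∑ j, |G s r j|)^2 := by
              apply Finset.sum_congr rfl
              intro r _
              show ‖q^(t-s) * ∑ j, |G s r j|‖^2 = _
              rw [Real.norm_eq_abs, sq_abs]
              ring
          _ ≤ ∑ r, (q^(t-s))^2 * ((n:ℝ) * ∑ j, (G s r j)^2) := by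
              apply Finset.sum_le_sum
              intro r _
              exact mul_le_mul_of_nonneg_left (hcs r) (by positivity)
          _ = (q^(t-s))^2 * ((n:ℝ) * ∑ r, ∑ j, (G s r j)^2) := by
              rw [← Finset.mul_sum, ← Finset.mul_sum]
          _ = (q^(t-s) * (Real.sqrt n * frobNorm (G s)))^2 := by
              rw [mul_pow, mul_pow, Real.sq_sqrt (le_of_lt hnR), hfrobsq]
      calc Real.sqrt (∑ r, ‖f s r‖^2)
          ≤ Real.sqrt ((q^(t-s) * (Real.sqrt n * frobNorm (G s)))^2) := Real.sqrt_le_sqrt hb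
        _ = q^(t-s) * (Real.sqrt n * frobNorm (G s)) := by
            rw [Real.sqrt_sq (by have := hfrob0 s; positivity)]
    calc ∑ r, (S r)^2
        ≤ (∑ s ∈ Finset.range (t+1), ‖f s‖)^2 := h1
      _ ≤ (∑ s ∈ Finset.range (t+1), q^(t-s) * (Real.sqrt n * frobNorm (G s)))^2 := by
          apply pow_le_pow_left₀ (Finset.sum_nonneg (fun s _ => norm_nonneg _))
          exact Finset.sum_le_sum h3
      _ = (n:ℝ) * T^2 := by
          have : ∑ s ∈ Finset.range (t+1), q^(t-s) * (Real.sqrt n * frobNorm (G s))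
              = Real.sqrt n * T := by
            rw [hT, Finset.mul_sum]
            apply Finset.sum_congr rfl
            intro s _
            ring
          rw [this, mul_pow, Real.sq_sqrt (le_of_lt hnR)]
  -- put everything together
  calc ∑ i, ∑ r, (x (t + 1) i r - zbar (t + 1) r) ^ 2
      ≤ ∑ _i : Fin n, ∑ r, (K * S r)^2 := by
        apply Finset.sum_le_sum
        intro i _
        apply Finset.sum_le_sum
        intro r _
        calc (x (t + 1) i r - zbar (t + 1) r) ^ 2
            = |x (t + 1) i r - zbar (t + 1) r| ^ 2 := (sq_abs _).symm
          _ ≤ (K * S r)^2 := pow_le_pow_left₀ (abs_nonneg _) (hdiff i r) 2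
    _ = (n:ℝ) * (K^2 * ∑ r, (S r)^2) := by
        rw [Finset.sum_const, Finset.card_univ, Fintype.card_fin, nsmul_eq_mul]
        congr 1
        rw [Finset.mul_sum]
        apply Finset.sum_congr rfl
        intro r _
        ring
    _ ≤ (n:ℝ) * (K^2 * ((n:ℝ) * T^2)) := by
        apply mul_le_mul_of_nonneg_left _ (le_of_lt hnR)
        exact mul_le_mul_of_nonneg_left hMink (sq_nonneg K)
    _ = 4 * γ ^ 2 * C ^ 2 * q ^ 2 / δmin ^ 2 * T ^ 2 := by
        rw [hK]
        field_simp
        ring
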